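/- The first-order Seiberg–Witten map for noncommutative U(1) Yang–Mills maps gauge orbits to gauge orbits: for all smooth functions λ, A₁, …, A_d: ℝᵈ → ℝ, every real antisymmetric d×d matrix θ, and each index i, one has the exact identity (d/ds)|_{s=0} Â_i( A + s∇λ ) = ∂_i λ̂(λ, A) − Σ_{k,l} θ^{kl} ∂_kλ ∂_lA_i, where the right-hand side is the noncommutative gauge transformation δ̂_{λ̂}Â_i = ∂_iλ̂ + i(λ̂ ⋆ Â_i − Â_i ⋆ λ̂) evaluated to first order in θ. -/

import Mathlib

/- STATEMENT 10: the first-order Seiberg–Witten map for noncommutative U(1)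
Yang–Mills maps gauge orbits to gauge orbits:
(d/ds)|₀ Â_i(A + s∇λ) = ∂_i λ̂(λ,A) − Σ_{k,l} θ^{kl} ∂_kλ ∂_lA_i. -/

noncomputable section

/-- Smooth real-valued functions on ℝᵈ. -/
abbrev SFd (d : ℕ) := (Fin d → ℝ) → ℝ

/-- Partial derivative ∂_k f at x. -/
def pdd {d : ℕ} (f : SFd d) (k : Fin d) (x : Fin d → ℝ) : ℝ :=
  fderiv ℝ f x (Pi.single k 1)

/-- First-order Seiberg–Witten field redefinition
  Â_i(A) = A_i − ½ Σ_{k,l} θ^{kl} A_k (2∂_lA_i − ∂_iA_l). -/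
def Ahat {d : ℕ} (θ : Fin d → Fin d → ℝ) (A : Fin d → SFd d) (i : Fin d)
    (x : Fin d → ℝ) : ℝ :=
  A i x - (1 / 2) * ∑ k, ∑ l, θ k l * A k x * (2 * pdd (A i) l x - pdd (A l) i x)

/-- First-order Seiberg–Witten gauge parameter
  λ̂(λ,A) = λ + ½ Σ_{k,l} θ^{kl} ∂_kλ A_l. -/
def lamhat {d : ℕ} (θ : Fin d → Fin d → ℝ) (lam : SFd d) (A : Fin d → SFd d)
    (x : Fin d → ℝ) : ℝ :=
  lam x + (1 / 2) * ∑ k, ∑ l, θ k l * pdd lam k x * A l x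

lemma pdd_smooth {d : ℕ} {f : SFd d} (hf : ContDiff ℝ (⊤ : ℕ∞) f) (k : Fin d) :
    ContDiff ℝ (⊤ : ℕ∞) (pdd f k) :=
  (hf.fderiv_right (by exact_mod_cast le_top)).clm_apply contDiff_const

lemma pdd_symm {d : ℕ} {f : SFd d} (hf : ContDiff ℝ (⊤ : ℕ∞) f)
    (k l : Fin d) (x : Fin d → ℝ) :
    pdd (pdd f k) l x = pdd (pdd f l) k x := by
  have hsym : IsSymmSndFDerivAt ℝ f x := hf.contDiffAt.isSymmSndFDerivAt
    (by rw [show ((2:WithTop ℕ∞)) = ((2:ℕ∞) : WithTop ℕ∞) by norm_cast]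
        simp only [minSmoothness_of_isRCLikeNormedField]
        exact_mod_cast (le_top : (2:ℕ∞) ≤ ⊤))
  have hd : DifferentiableAt ℝ (fderiv ℝ f) x :=
    ((hf.fderiv_right (m := (⊤:ℕ∞)) (by exact_mod_cast le_top)).differentiable
      (by simp)).differentiableAt
  have h : ∀ v : Fin d → ℝ, fderiv ℝ (fun y => fderiv ℝ f y v) x =
      (fderiv ℝ (fderiv ℝ f) x).flip v := by
    intro v
    have := fderiv_clm_apply (c := fderiv ℝ f) (u := fun _ => v) hd (differentiableAt_const v)
    simpa using this
  show fderiv ℝ (fun y => fderiv ℝ f y (Pi.single k 1)) x (Pi.single l 1) = _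
  rw [h]
  show fderiv ℝ (fderiv ℝ f) x (Pi.single l 1) (Pi.single k 1) = _
  rw [hsym]
  rw [show pdd (pdd f l) k x = fderiv ℝ (fun y => fderiv ℝ f y (Pi.single l 1)) x
    (Pi.single k 1) from rfl, h]
  rfl

lemma pdd_add {d : ℕ} {f g : SFd d} {x : Fin d → ℝ} (hf : DifferentiableAt ℝ f x)
    (hg : DifferentiableAt ℝ g x) (k : Fin d) :
    pdd (fun y => f y + g y) k x = pdd f k x + pdd g k x := by
  simp [pdd, fderiv_fun_add hf hg]

lemma pdd_const_mul {d : ℕ} {f : SFd d} {x : Fin d → ℝ} (hf : DifferentiableAt ℝ f x)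
    (c : ℝ) (k : Fin d) :
    pdd (fun y => c * f y) k x = c * pdd f k x := by
  simp [pdd, fderiv_const_mul hf c]

lemma pdd_mul {d : ℕ} {f g : SFd d} {x : Fin d → ℝ} (hf : DifferentiableAt ℝ f x)
    (hg : DifferentiableAt ℝ g x) (k : Fin d) :
    pdd (fun y => f y * g y) k x = pdd f k x * g x + f x * pdd g k x := by
  simp [pdd, fderiv_fun_mul hf hg]
  ring

lemma pdd_sum {d n : ℕ} {f : Fin n → SFd d} {x : Fin d → ℝ}
    (hf : ∀ j, DifferentiableAt ℝ (f j) x) (k : Fin d) :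
    pdd (fun y => ∑ j, f j y) k x = ∑ j, pdd (f j) k x := by
  simp [pdd, fderiv_fun_sum (fun j _ => hf j)]


lemma dsum_add {d : ℕ} (f g : Fin d → Fin d → ℝ) :
    ∑ k, ∑ l, (f k l + g k l) = (∑ k, ∑ l, f k l) + (∑ k, ∑ l, g k l) := by
  simp [Finset.sum_add_distrib]

lemma dsum_sub {d : ℕ} (f g : Fin d → Fin d → ℝ) :
    ∑ k, ∑ l, (f k l - g k l) = (∑ k, ∑ l, f k l) - (∑ k, ∑ l, g k l) := by
  simp [Finset.sum_sub_distrib]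

lemma dsum_cmul {d : ℕ} (c : ℝ) (f : Fin d → Fin d → ℝ) :
    ∑ k, ∑ l, c * f k l = c * ∑ k, ∑ l, f k l := by
  simp [Finset.mul_sum]

theorem SW_first_order_U1_gauge_orbits
    (d : ℕ) (θ : Fin d → Fin d → ℝ) (hθ : ∀ k l, θ k l = -θ l k)
    (lam : SFd d) (A : Fin d → SFd d)
    (hlam : ContDiff ℝ (⊤ : ℕ∞) lam) (hA : ∀ i, ContDiff ℝ (⊤ : ℕ∞) (A i)) :
    ∀ (i : Fin d) (x : Fin d → ℝ),
      deriv (fun s : ℝ =>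
          Ahat θ (fun m y => A m y + s * pdd lam m y) i x) 0
        = pdd (lamhat θ lam A) i x
          - ∑ k, ∑ l, θ k l * pdd lam k x * pdd (A i) l x := by
  intro i x
  have hdA : ∀ m (y : Fin d → ℝ), DifferentiableAt ℝ (A m) y := fun m y =>
    ((hA m).differentiable (by simp)).differentiableAt
  have hdpl : ∀ m (y : Fin d → ℝ), DifferentiableAt ℝ (pdd lam m) y := fun m y =>
    ((pdd_smooth hlam m).differentiable (by simp)).differentiableAt
  have hdlam : ∀ (y : Fin d → ℝ), DifferentiableAt ℝ lam y := fun y =>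
    (hlam.differentiable (by simp)).differentiableAt
  have hpt : ∀ (s : ℝ) (m l : Fin d),
      pdd (fun y => A m y + s * pdd lam m y) l x
        = pdd (A m) l x + s * pdd (pdd lam m) l x := by
    intro s m l
    rw [pdd_add (hdA m x) ((hdpl m x).const_mul s) l, pdd_const_mul (hdpl m x) s l]
  have hQsymm : ∀ k l : Fin d, pdd (pdd lam k) l x = pdd (pdd lam l) k x :=
    fun k l => pdd_symm hlam k l x
  set S1 : ℝ := ∑ k, ∑ l, θ k l * pdd lam k x * pdd (A i) l x with hS1
  set S2 : ℝ := ∑ k, ∑ l, θ k l * pdd lam k x * pdd (A l) i x with hS2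
  set S3 : ℝ := ∑ k, ∑ l, θ k l * A k x * pdd (pdd lam i) l x with hS3
  set T0 : ℝ := ∑ k, ∑ l, θ k l * A k x * (2 * pdd (A i) l x - pdd (A l) i x) with hT0
  set T2 : ℝ := ∑ k, ∑ l, θ k l * pdd lam k x * pdd (pdd lam i) l x with hT2
  -- polynomial form of the LHS function
  have hF : (fun s : ℝ => Ahat θ (fun m y => A m y + s * pdd lam m y) i x)
      = fun s : ℝ => (A i x - (1/2) * T0)
          + (pdd lam i x - (1/2) * (2*S1 - S2 + S3)) * s + (-(1/2) * T2) * s^2 := by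
    funext s
    simp only [Ahat]
    simp only [hpt s]
    have hterm : ∀ k l : Fin d,
        θ k l * (A k x + s * pdd lam k x) *
          (2 * (pdd (A i) l x + s * pdd (pdd lam i) l x)
            - (pdd (A l) i x + s * pdd (pdd lam l) i x))
        = θ k l * A k x * (2 * pdd (A i) l x - pdd (A l) i x)
          + (s * (2 * (θ k l * pdd lam k x * pdd (A i) l x)
              - θ k l * pdd lam k x * pdd (A l) i x
              + θ k l * A k x * pdd (pdd lam i) l x)
          + s^2 * (θ k l * pdd lam k x * pdd (pdd lam i) l x)) := by
      intro k l
      rw [hQsymm l i]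
      ring
    rw [Finset.sum_congr rfl fun k _ => Finset.sum_congr rfl fun l _ => hterm k l]
    simp only [dsum_add, dsum_sub, dsum_cmul]
    rw [← hS1, ← hS2, ← hS3, ← hT0, ← hT2]
    ring
  rw [hF]
  -- the derivative at 0
  have hder : HasDerivAt (fun s : ℝ => (A i x - (1/2) * T0)
      + (pdd lam i x - (1/2) * (2*S1 - S2 + S3)) * s + (-(1/2) * T2) * s^2)
      (pdd lam i x - (1/2) * (2*S1 - S2 + S3)) 0 := by
    have h1 : HasDerivAt (fun s : ℝ => (pdd lam i x - (1/2) * (2*S1 - S2 + S3)) * s)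
        (pdd lam i x - (1/2) * (2*S1 - S2 + S3)) 0 := by
      simpa using (hasDerivAt_id (0:ℝ)).const_mul (pdd lam i x - (1/2) * (2*S1 - S2 + S3))
    have h2 : HasDerivAt (fun s : ℝ => (-(1/2) * T2) * s^2) 0 0 := by
      simpa using (hasDerivAt_pow 2 (0:ℝ)).const_mul (-(1/2) * T2)
    simpa using ((hasDerivAt_const (0:ℝ) (A i x - (1/2) * T0)).fun_add h1).fun_add h2
  rw [hder.deriv]
  -- compute pdd of lamhat
  have hdterm : ∀ (k l : Fin d) (y : Fin d → ℝ),
      DifferentiableAt ℝ (fun y => θ k l * pdd lam k y * A l y) y := fun k l y =>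
    ((hdpl k y).const_mul (θ k l)).mul (hdA l y)
  have hdinner : ∀ (k : Fin d) (y : Fin d → ℝ),
      DifferentiableAt ℝ (fun y => ∑ l, θ k l * pdd lam k y * A l y) y := fun k y =>
    DifferentiableAt.fun_sum fun l _ => hdterm k l y
  have hdsum : ∀ (y : Fin d → ℝ),
      DifferentiableAt ℝ (fun y => ∑ k, ∑ l, θ k l * pdd lam k y * A l y) y := fun y =>
    DifferentiableAt.fun_sum fun k _ => hdinner k y
  have hterm2 : ∀ k l : Fin d, pdd (fun y => θ k l * pdd lam k y * A l y) i x
      = θ k l * pdd (pdd lam k) i x * A l x + θ k l * pdd lam k x * pdd (A l) i x := by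
    intro k l
    have e : (fun y => θ k l * pdd lam k y * A l y)
        = fun y => (fun y => θ k l * pdd lam k y) y * A l y := rfl
    rw [e, pdd_mul ((hdpl k x).const_mul (θ k l)) (hdA l x) i,
      pdd_const_mul (hdpl k x) (θ k l) i]
  have hRsum : pdd (lamhat θ lam A) i x
      = pdd lam i x + (1/2) * ∑ k, ∑ l, (θ k l * pdd (pdd lam k) i x * A l x
          + θ k l * pdd lam k x * pdd (A l) i x) := by
    have e1 : lamhat θ lam A
        = fun y => lam y + (1/2) * ∑ k, ∑ l, θ k l * pdd lam k y * A l y := rfl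
    rw [e1, pdd_add (hdlam x) ((hdsum x).const_mul (1/2)) i,
      pdd_const_mul (hdsum x) (1/2) i, pdd_sum (fun k => hdinner k x) i]
    have hstep : ∀ k : Fin d, pdd (fun y => ∑ l, θ k l * pdd lam k y * A l y) i x
        = ∑ l, (θ k l * pdd (pdd lam k) i x * A l x
            + θ k l * pdd lam k x * pdd (A l) i x) := by
      intro k
      rw [pdd_sum (fun l => hdterm k l x) i]
      exact Finset.sum_congr rfl fun l _ => hterm2 k l
    rw [Finset.sum_congr rfl fun k _ => hstep k]
  rw [hRsum]
  -- the swap identity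
  have hswap : ∑ k, ∑ l, θ k l * pdd (pdd lam k) i x * A l x = -S3 := by
    rw [Finset.sum_comm, hS3, ← Finset.sum_neg_distrib]
    refine Finset.sum_congr rfl fun l _ => ?_
    rw [← Finset.sum_neg_distrib]
    refine Finset.sum_congr rfl fun k _ => ?_
    rw [hθ k l, hQsymm k i]
    ring
  rw [dsum_add, hswap]
  ring
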